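/- For every positive long root φ ≠ θ in an irreducible root system, there exists a simple reflection s_i such that s_i φ is a root with L(s_i φ) = L(φ) − 1. -/

import Mathlib

open scoped RealInnerProductSpace BigOperators

noncomputable section

variable (V : Type) [NormedAddCommGroup V] [InnerProductSpace ℝ V] [FiniteDimensional ℝ V]

/-- A finite, reduced, crystallographic root system in a Euclidean space `V`,
with a chosen set of positive roots and the corresponding simple roots. -/
structure RootSystemData where
  /-- the rank -/
  l : ℕ
  /-- the simple roots -/
  simple : Fin l → V
  /-- the set of roots -/
  roots : Finset V
  /-- the set of positive roots -/
  pos : Finset V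
  pos_subset : pos ⊆ roots
  simple_mem_pos : ∀ i, simple i ∈ pos
  simple_indep : LinearIndependent ℝ simple
  span_roots : Submodule.span ℝ (roots : Set V) = ⊤
  root_ne_zero : ∀ α ∈ roots, α ≠ 0
  neg_mem : ∀ α ∈ roots, -α ∈ roots
  pos_iff : ∀ α ∈ roots, (α ∈ pos ↔ -α ∉ pos)
  pos_combo : ∀ α ∈ pos, ∃ c : Fin l → ℕ, α = ∑ i, (c i : ℝ) • simple i
  crystal : ∀ α ∈ roots, ∀ β ∈ roots, ∃ n : ℤ, 2 * ⟪β, α⟫ / ⟪α, α⟫ = (n : ℝ)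
  reflect_mem : ∀ α ∈ roots, ∀ β ∈ roots, β - (2 * ⟪β, α⟫ / ⟪α, α⟫) • α ∈ roots
  sub_mem : ∀ α ∈ roots, ∀ β ∈ roots, 0 < ⟪α, β⟫ → α ≠ β → α - β ∈ roots
  reduced : ∀ α ∈ roots, ∀ c : ℝ, c • α ∈ roots → c = 1 ∨ c = -1

namespace RootSystemData

open Classical

variable {V}

/-- The pairing `⟨λ, α∨⟩ = 2(λ|α)/(α|α)` of a vector with the coroot of `α`. -/
def pair (lam α : V) : ℝ := 2 * ⟪lam, α⟫ / ⟪α, α⟫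

/-- The orthogonal reflection in the hyperplane orthogonal to `α`. -/
def sRefl (α : V) : V ≃ₗᵢ[ℝ] V := Submodule.reflection ((ℝ ∙ α)ᗮ)

variable (R : RootSystemData V)

/-- Half the sum of the positive roots. -/
def ρ : V := (2 : ℝ)⁻¹ • ∑ φ ∈ R.pos, φ

/-- The (finite) Weyl group, generated by the simple reflections. -/
def W : Subgroup (V ≃ₗᵢ[ℝ] V) :=
  Subgroup.closure (Set.range fun i => sRefl (R.simple i))

/-- The length of a Weyl group element: the minimal length of a word in the
simple reflections expressing it. -/
def len (w : V ≃ₗᵢ[ℝ] V) : ℕ :=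
  sInf {k : ℕ | ∃ f : Fin k → Fin R.l,
    w = (List.ofFn fun j => sRefl (R.simple (f j))).prod}

/-- The inversion set `Φ_w = Φ₊ ∩ wΦ₋`. -/
def inversions (w : V ≃ₗᵢ[ℝ] V) : Finset V :=
  R.pos.filter fun x => -(w.symm x) ∈ R.pos

end RootSystemData

/-- An irreducible root system, together with its highest root `θ`. -/
structure IrredRootSystemData extends RootSystemData V where
  /-- the highest root -/
  θ : V
  θ_mem_pos : θ ∈ pos
  θ_highest : ∀ φ ∈ pos, ∃ c : Fin l → ℕ, θ - φ = ∑ i, (c i : ℝ) • simple i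
  θ_long : ∀ φ ∈ roots, ‖φ‖ ≤ ‖θ‖
  θ_dominant : ∀ i, 0 ≤ ⟪θ, simple i⟫
  irreducible : ∀ s : Finset V, s ⊆ roots →
      (∀ α ∈ s, ∀ β ∈ roots, β ∉ s → ⟪α, β⟫ = 0) → s = ∅ ∨ s = roots

namespace IrredRootSystemData

variable {V} (R : IrredRootSystemData V)

/-- The affine functional `L(φ) = 2(θ−φ|ρ)/(θ|θ)`. -/
def L (φ : V) : ℝ := 2 * ⟪R.θ - φ, R.toRootSystemData.ρ⟫ / ⟪R.θ, R.θ⟫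

/-- A root is long if it has the same length as the highest root. -/
def IsLong (φ : V) : Prop := ‖φ‖ = ‖R.θ‖

/-- The dual Coxeter number `g = ⟨ρ, θ∨⟩ + 1`. -/
def dualCox : ℝ := RootSystemData.pair R.toRootSystemData.ρ R.θ + 1

/-- The affine reflection `s₀(λ) = λ − (⟨λ,θ∨⟩ − g)θ` (scaled so that `s₀ρ = ρ + θ`). -/
def s0 (lam : V) : V := lam - (RootSystemData.pair lam R.θ - R.dualCox) • R.θ

end IrredRootSystemData


set_option linter.unusedSectionVars false

section Helpers

namespace RootSystemData

variable {V : Type} [NormedAddCommGroup V] [InnerProductSpace ℝ V] [FiniteDimensional ℝ V]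

lemma pair_def (v α : V) : pair v α = 2 * ⟪v, α⟫ / ⟪α, α⟫ := rfl

lemma pair_smul_left (c : ℝ) (v α : V) : pair (c • v) α = c * pair v α := by
  simp only [pair_def, real_inner_smul_left]; ring

lemma pair_self {α : V} (hα : ⟪α, α⟫ ≠ (0:ℝ)) : pair α α = 2 := by
  rw [pair_def]; field_simp

lemma pair_sub_smul (v α : V) (t : ℝ) :
    pair (v - t • α) α = pair v α - t * pair α α := by
  simp only [pair_def, inner_sub_left, real_inner_smul_left]; ring

variable (R : RootSystemData V)

lemma neg_mem_pos' {α : V} (hα : α ∈ R.roots) (h : α ∉ R.pos) : -α ∈ R.pos := by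
  have h2 := R.pos_iff (-α) (R.neg_mem α hα)
  rw [h2, neg_neg]; exact h

lemma coords_unique {a b : Fin R.l → ℝ}
    (h : ∑ i, a i • R.simple i = ∑ i, b i • R.simple i) : ∀ i, a i = b i := by
  have h0 : ∑ i, (a i - b i) • R.simple i = 0 := by
    simp only [sub_smul, Finset.sum_sub_distrib, h, sub_self]
  have key := Fintype.linearIndependent_iff.mp R.simple_indep (fun i => a i - b i) h0
  intro i
  have hi := key i
  simp only [sub_eq_zero] at hi
  exact hi

lemma reflect_pos (i : Fin R.l) {β : V} (hβ : β ∈ R.pos) (hne : β ≠ R.simple i) :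
    β - pair β (R.simple i) • R.simple i ∈ R.pos := by
  set α := R.simple i with hα_def
  have hαr : α ∈ R.roots := R.pos_subset (R.simple_mem_pos i)
  have hβr : β ∈ R.roots := R.pos_subset hβ
  have hroot : β - pair β α • α ∈ R.roots := R.reflect_mem α hαr β hβr
  by_contra h
  have hneg : -(β - pair β α • α) ∈ R.pos := R.neg_mem_pos' hroot h
  obtain ⟨c, hc⟩ := R.pos_combo β hβ
  obtain ⟨d, hd⟩ := R.pos_combo _ hneg
  have key : ∑ j, ((c j : ℝ) + (d j : ℝ)) • R.simple j
      = ∑ j, (if j = i then pair β α else 0) • R.simple j := by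
    have hL : ∑ j, ((c j : ℝ) + (d j : ℝ)) • R.simple j = β + -(β - pair β α • α) := by
      simp only [add_smul, Finset.sum_add_distrib]
      rw [← hc, ← hd]
    have hR : ∑ j, (if j = i then pair β α else 0) • R.simple j = pair β α • α := by
      rw [Finset.sum_eq_single i]
      · simp [hα_def]
      · intro b _ hb; simp [hb]
      · intro hi; exact absurd (Finset.mem_univ i) hi
    rw [hL, hR]; abel
  have huniq := R.coords_unique key
  have hcj : ∀ j, j ≠ i → (c j : ℝ) = 0 := by
    intro j hj
    have := huniq j
    rw [if_neg hj] at this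
    have h1 : (0:ℝ) ≤ (c j : ℝ) := Nat.cast_nonneg _
    have h2 : (0:ℝ) ≤ (d j : ℝ) := Nat.cast_nonneg _
    linarith
  have hβ_eq : β = (c i : ℝ) • α := by
    rw [hc, Finset.sum_eq_single i]
    · intro b _ hb; rw [hcj b hb, zero_smul]
    · intro hi; exact absurd (Finset.mem_univ i) hi
  have hmem : (c i : ℝ) • α ∈ R.roots := hβ_eq ▸ hβr
  rcases R.reduced α hαr (c i) hmem with h1 | h1
  · exact hne (by rw [hβ_eq, h1, one_smul])
  · have : (0:ℝ) ≤ (c i : ℝ) := Nat.cast_nonneg _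
    linarith [h1 ▸ this]

lemma pair_rho (i : Fin R.l) : pair R.ρ (R.simple i) = 1 := by
  classical
  set α := R.simple i with hα_def
  have hαpos : α ∈ R.pos := R.simple_mem_pos i
  have hαr : α ∈ R.roots := R.pos_subset hαpos
  have hα0 : α ≠ 0 := R.root_ne_zero α hαr
  have hαα : ⟪α, α⟫ ≠ (0:ℝ) := fun h => hα0 (inner_self_eq_zero.mp h)
  set T : V → V := fun v => v - pair v α • α with hT_def
  have hTT : ∀ v, T (T v) = v := by
    intro v
    simp only [hT_def]
    rw [pair_sub_smul, pair_self hαα]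
    module
  have hTα : T α = -α := by
    simp only [hT_def, pair_self hαα]
    rw [two_smul]; abel
  have hnotneg : -α ∉ R.pos := by
    have := (R.pos_iff α hαr).mp hαpos; exact this
  -- sum over erase is invariant
  have herase : ∑ β ∈ R.pos.erase α, T β = ∑ β ∈ R.pos.erase α, β := by
    apply Finset.sum_nbij' T T
    · intro a ha
      rw [Finset.mem_erase] at ha ⊢
      refine ⟨?_, R.reflect_pos i ha.2 ha.1⟩
      intro hTa
      have : a = T α := by rw [← hTa, hTT]
      rw [hTα] at this
      exact hnotneg (this ▸ ha.2)
    · intro a ha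
      rw [Finset.mem_erase] at ha ⊢
      refine ⟨?_, R.reflect_pos i ha.2 ha.1⟩
      intro hTa
      have : a = T α := by rw [← hTa, hTT]
      rw [hTα] at this
      exact hnotneg (this ▸ ha.2)
    · intro a _; exact hTT a
    · intro a _; exact hTT a
    · intro a _; rfl
  set S : V := ∑ β ∈ R.pos, β with hS_def
  have hway1 : ∑ β ∈ R.pos, T β = S - pair S α • α := by
    have h1 : pair S α = ∑ β ∈ R.pos, pair β α := by
      simp only [pair_def, hS_def, sum_inner, Finset.mul_sum, Finset.sum_div]
    simp only [hT_def, Finset.sum_sub_distrib, ← hS_def, h1, Finset.sum_smul]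
  have hway2 : ∑ β ∈ R.pos, T β = S - (2:ℝ) • α := by
    rw [← Finset.add_sum_erase _ _ hαpos, hTα, herase, hS_def,
      ← Finset.add_sum_erase _ _ hαpos]
    rw [two_smul]; abel
  have hpairS : pair S α = 2 := by
    have h2 : S - pair S α • α = S - (2:ℝ) • α := hway1.symm.trans hway2
    have heq : pair S α • α = (2:ℝ) • α := sub_right_injective h2
    exact smul_left_injective ℝ hα0 heq
  have hρ : R.ρ = (2:ℝ)⁻¹ • S := rfl
  rw [hρ, pair_smul_left, hpairS]
  norm_num

end RootSystemData

end Helpers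

/-- For every positive long root `φ ≠ θ` there is a simple reflection `s_i`
with `L(s_i φ) = L(φ) − 1`. -/
theorem exists_simple_reflection_decreasing_L (R : IrredRootSystemData V)
    (φ : V) (hφ : φ ∈ R.pos) (hlong : R.IsLong φ) (hne : φ ≠ R.θ) :
    ∃ i : Fin R.l,
      R.L (φ - RootSystemData.pair φ (R.simple i) • R.simple i) = R.L φ - 1 := by
  classical
  have hθpos : R.θ ∈ R.pos := R.θ_mem_pos
  have hθr : R.θ ∈ R.roots := R.pos_subset hθpos
  have hφr : φ ∈ R.roots := R.pos_subset hφ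
  have hθ0 : R.θ ≠ 0 := R.root_ne_zero R.θ hθr
  have hφ0 : φ ≠ 0 := R.root_ne_zero φ hφr
  have hnorm : ‖φ‖ = ‖R.θ‖ := hlong
  have hθn0 : ‖R.θ‖ ≠ 0 := norm_ne_zero_iff.mpr hθ0
  have hφn0 : ‖φ‖ ≠ 0 := norm_ne_zero_iff.mpr hφ0
  have hφφθθ : ⟪φ, φ⟫ = ⟪R.θ, R.θ⟫ := by
    rw [real_inner_self_eq_norm_mul_norm, real_inner_self_eq_norm_mul_norm, hnorm]
  have hΘpos : (0:ℝ) < ⟪R.θ, R.θ⟫ := by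
    rw [real_inner_self_eq_norm_mul_norm]
    exact mul_pos (norm_pos_iff.mpr hθ0) (norm_pos_iff.mpr hθ0)
  have hφφpos : (0:ℝ) < ⟪φ, φ⟫ := hφφθθ ▸ hΘpos
  -- ⟪φ, θ⟫ < ⟪θ, θ⟫
  have hlt : ⟪φ, R.θ⟫ < ⟪R.θ, R.θ⟫ := by
    have h1 : ⟪φ, R.θ⟫ ≤ ‖φ‖ * ‖R.θ‖ := real_inner_le_norm φ R.θ
    rw [real_inner_self_eq_norm_mul_norm]
    rcases lt_or_eq_of_le h1 with h | h
    · rw [hnorm] at h; exact h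
    · exfalso
      have h3 := inner_eq_norm_mul_iff_real.mp h
      rw [hnorm] at h3
      exact hne (smul_right_injective V hθn0 h3)
  obtain ⟨c, hc⟩ := R.θ_highest φ hφ
  have hsum : ∑ j, (c j : ℝ) * ⟪φ, R.simple j⟫ < 0 := by
    have h1 : ⟪φ, R.θ - φ⟫ = ∑ j, (c j : ℝ) * ⟪φ, R.simple j⟫ := by
      rw [hc, inner_sum]
      simp [real_inner_smul_right]
    have h2 : ⟪φ, R.θ - φ⟫ < 0 := by
      rw [inner_sub_right]; linarith
    rw [h1] at h2; exact h2
  have hex : ∃ j, ⟪φ, R.simple j⟫ < 0 := by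
    by_contra hno
    push_neg at hno
    have : (0:ℝ) ≤ ∑ j, (c j : ℝ) * ⟪φ, R.simple j⟫ :=
      Finset.sum_nonneg fun j _ => mul_nonneg (Nat.cast_nonneg _) (hno j)
    linarith
  obtain ⟨j, hj⟩ := hex
  refine ⟨j, ?_⟩
  set α := R.simple j with hα_def
  have hαpos : α ∈ R.pos := R.simple_mem_pos j
  have hαr : α ∈ R.roots := R.pos_subset hαpos
  have hα0 : α ≠ 0 := R.root_ne_zero α hαr
  have hαα : ⟪α, α⟫ ≠ (0:ℝ) := fun h => hα0 (inner_self_eq_zero.mp h)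
  obtain ⟨k, hk⟩ := R.crystal φ hφr α hαr
  have hαφ : ⟪α, φ⟫ = ⟪φ, α⟫ := real_inner_comm φ α
  have hkneg : (k : ℝ) < 0 := by
    rw [← hk]
    apply div_neg_of_neg_of_pos _ hφφpos
    rw [hαφ]; linarith
  have hαn : ‖α‖ ≤ ‖φ‖ := by rw [hnorm]; exact R.θ_long α hαr
  -- strict lower bound on ⟪α, φ⟫
  have hlb : -⟪φ, φ⟫ < ⟪α, φ⟫ := by
    have h1 : ⟪-α, φ⟫ ≤ ‖α‖ * ‖φ‖ := by
      simpa [norm_neg] using real_inner_le_norm (-α) φ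
    have h2 : ‖α‖ * ‖φ‖ ≤ ‖φ‖ * ‖φ‖ := mul_le_mul_of_nonneg_right hαn (norm_nonneg _)
    have hn1 : ⟪-α, φ⟫ = -⟪α, φ⟫ := inner_neg_left α φ
    have hnn : ⟪φ, φ⟫ = ‖φ‖ * ‖φ‖ := real_inner_self_eq_norm_mul_norm φ
    by_contra hcon
    push_neg at hcon
    have e2 : ‖α‖ * ‖φ‖ = ‖φ‖ * ‖φ‖ := by linarith
    have hnα : ‖α‖ = ‖φ‖ := mul_right_cancel₀ hφn0 e2
    have e3 : ⟪-α, φ⟫ = ‖-α‖ * ‖φ‖ := by rw [norm_neg, hnα, hn1]; linarith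
    have e4 := inner_eq_norm_mul_iff_real.mp e3
    rw [norm_neg, hnα] at e4
    have e5 : -α = φ := smul_right_injective V hφn0 e4
    have e6 : α = -φ := by rw [← e5, neg_neg]
    have hcontra := (R.pos_iff φ hφr).mp hφ
    exact hcontra (e6 ▸ hαpos)
  have hkm2 : (-2 : ℝ) < (k : ℝ) := by
    rw [← hk, lt_div_iff₀ hφφpos]
    linarith
  have hk1 : k = -1 := by
    have a1 : k < 0 := by exact_mod_cast hkneg
    have a2 : (-2 : ℤ) < k := by exact_mod_cast hkm2
    omega
  have hkey : 2 * ⟪α, φ⟫ = -⟪φ, φ⟫ := by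
    have hdiv : 2 * ⟪α, φ⟫ / ⟪φ, φ⟫ = -1 := by rw [hk, hk1]; norm_num
    have := (div_eq_iff (ne_of_gt hφφpos)).mp hdiv
    linarith
  set n := RootSystemData.pair φ α with hn_def
  have hnαα : n * ⟪α, α⟫ = 2 * ⟪φ, α⟫ := by
    rw [hn_def, RootSystemData.pair_def]
    field_simp
  have hρα : 2 * ⟪R.toRootSystemData.ρ, α⟫ = ⟪α, α⟫ := by
    have h := RootSystemData.pair_rho R.toRootSystemData j
    rw [RootSystemData.pair_def] at h
    have := (div_eq_iff hαα).mp h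
    linarith
  have hφα : ⟪φ, α⟫ = ⟪α, φ⟫ := real_inner_comm α φ
  have hfin : n * ⟪R.toRootSystemData.ρ, α⟫ = -⟪R.θ, R.θ⟫ / 2 := by
    linear_combination (n/2) * hρα + (1/2) * hnαα + hφα + (1/2) * hkey - (1/2) * hφφθθ
  have hinner : ⟪R.θ - (φ - n • α), R.toRootSystemData.ρ⟫
      = ⟪R.θ - φ, R.toRootSystemData.ρ⟫ + n * ⟪α, R.toRootSystemData.ρ⟫ := by
    rw [show R.θ - (φ - n • α) = (R.θ - φ) + n • α by abel]
    rw [inner_add_left, real_inner_smul_left]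
  show R.L (φ - n • α) = R.L φ - 1
  unfold IrredRootSystemData.L
  rw [hinner, real_inner_comm R.toRootSystemData.ρ α, hfin]
  field_simp
  ring
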